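/- (Yu–Gu lower bound) For an invertible n×n complex matrix A with n ≥ 2, σ_min(A) ≥ |det A| · ((n-1)/‖A‖_F²)^{(n-1)/2}, where ‖A‖_F is the Frobenius norm. -/

import Mathlib

open Finset Matrix

/-- The smallest singular value of a square complex matrix. -/
noncomputable def sigmaMin {n : ℕ} (A : Matrix (Fin n) (Fin n) ℂ) : ℝ :=
  Real.sqrt (⨅ i, (Matrix.isHermitian_conjTranspose_mul_self A).eigenvalues i)

/-- AM-GM: product is at most (average)^card. -/
lemma amgm_aux {ι : Type*} (s : Finset ι) (hs : s.Nonempty) (f : ι → ℝ)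
    (hf : ∀ i ∈ s, 0 ≤ f i) :
    ∏ i ∈ s, f i ≤ ((∑ i ∈ s, f i) / s.card) ^ (s.card) := by
  have hc : (0:ℝ) < s.card := by exact_mod_cast hs.card_pos
  have h := Real.geom_mean_le_arith_mean_weighted s (fun _ => (s.card : ℝ)⁻¹) f
    (fun i _ => by positivity)
    (by rw [Finset.sum_const, nsmul_eq_mul, mul_inv_cancel₀ (ne_of_gt hc)]) hf
  have hL : ∏ i ∈ s, f i ^ ((s.card:ℝ)⁻¹) = (∏ i ∈ s, f i) ^ ((s.card:ℝ)⁻¹) := by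
    rw [← Real.finset_prod_rpow s f hf]
  have hR : ∑ i ∈ s, ((s.card:ℝ)⁻¹) * f i = (∑ i ∈ s, f i) / s.card := by
    rw [← Finset.mul_sum, inv_mul_eq_div]
  rw [hL, hR] at h
  have hP : (0:ℝ) ≤ ∏ i ∈ s, f i := Finset.prod_nonneg hf
  calc ∏ i ∈ s, f i = ((∏ i ∈ s, f i) ^ ((s.card:ℝ)⁻¹)) ^ (s.card : ℕ) := by
        rw [← Real.rpow_natCast ((∏ i ∈ s, f i) ^ ((s.card:ℝ)⁻¹)) s.card,
          ← Real.rpow_mul hP, inv_mul_cancel₀ (ne_of_gt hc), Real.rpow_one]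
    _ ≤ ((∑ i ∈ s, f i) / s.card) ^ (s.card) :=
        pow_le_pow_left₀ (Real.rpow_nonneg hP _) h _

set_option maxHeartbeats 1000000 in
theorem yu_gu_lower_bound (n : ℕ) (hn : 2 ≤ n)
    (A : Matrix (Fin n) (Fin n) ℂ) (hA : IsUnit A.det) :
    sigmaMin A ≥ ‖A.det‖ *
      (((n : ℝ) - 1) / (∑ i, ∑ j, ‖A i j‖ ^ 2)) ^ (((n : ℝ) - 1) / 2) := by
  have hne : Nonempty (Fin n) := ⟨⟨0, by omega⟩⟩
  have hH : (Aᴴ * A).IsHermitian := Matrix.isHermitian_conjTranspose_mul_self A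
  set μ : Fin n → ℝ := (Matrix.isHermitian_conjTranspose_mul_self A).eigenvalues with hμdef
  set F : ℝ := ∑ i, ∑ j, ‖A i j‖ ^ 2 with hFdef
  set D : ℝ := ‖A.det‖ with hDdef
  have hμ0 : ∀ i, 0 ≤ μ i := fun i =>
    Matrix.eigenvalues_conjTranspose_mul_self_nonneg A i
  -- determinant of Aᴴ * A
  have hdet2 : (Aᴴ * A).det = ((D^2 : ℝ) : ℂ) := by
    rw [Matrix.det_mul, Matrix.det_conjTranspose, hDdef]
    rw [mul_comm, Complex.star_def, Complex.mul_conj]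
    rw [Complex.normSq_eq_norm_sq]
  -- product of eigenvalues = D^2
  have hprod : ∏ i, μ i = D^2 := by
    have h2 := (Matrix.isHermitian_conjTranspose_mul_self A).det_eq_prod_eigenvalues
    rw [← hμdef, hdet2] at h2
    have h3 : ((D^2 : ℝ) : ℂ) = ((∏ i, μ i : ℝ) : ℂ) := by rw [h2]; push_cast; rfl
    exact_mod_cast h3.symm
  -- trace of Aᴴ * A equals F
  have htraceC : (Aᴴ * A).trace = ((F : ℝ) : ℂ) := by
    rw [hFdef]
    push_cast
    rw [Matrix.trace]
    simp only [Matrix.diag, Matrix.mul_apply, Matrix.conjTranspose_apply]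
    rw [Finset.sum_comm]
    refine Finset.sum_congr rfl fun i _ => Finset.sum_congr rfl fun j _ => ?_
    rw [mul_comm, Complex.star_def, Complex.mul_conj, Complex.normSq_eq_norm_sq]
    push_cast
    ring
  have htrace : ∑ i, μ i = F := by
    have h2 : (Aᴴ * A).trace = ∑ i, ((μ i : ℝ) : ℂ) := by
      conv_lhs => rw [(Matrix.isHermitian_conjTranspose_mul_self A).spectral_theorem]
      rw [Unitary.conjStarAlgAut_apply, Matrix.trace_mul_cycle]
      rw [show (star ((Matrix.isHermitian_conjTranspose_mul_self A).eigenvectorUnitary :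
          Matrix (Fin n) (Fin n) ℂ)) *
          ((Matrix.isHermitian_conjTranspose_mul_self A).eigenvectorUnitary :
          Matrix (Fin n) (Fin n) ℂ) = 1 from
        (Matrix.mem_unitaryGroup_iff').mp
          ((Matrix.isHermitian_conjTranspose_mul_self A).eigenvectorUnitary).2]
      rw [Matrix.one_mul, Matrix.trace_diagonal]
      rfl
    have h3 := h2.symm.trans htraceC
    exact_mod_cast h3
  have hD0 : 0 < D := by
    rw [hDdef]
    exact norm_pos_iff.mpr (IsUnit.ne_zero hA)
  have hμpos : ∀ i, 0 < μ i := by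
    intro i
    rcases lt_or_eq_of_le (hμ0 i) with h | h
    · exact h
    · exfalso
      have : ∏ j, μ j = 0 := Finset.prod_eq_zero (Finset.mem_univ i) h.symm
      rw [hprod] at this
      nlinarith
  have hF0 : 0 < F := by
    rw [← htrace]
    exact Finset.sum_pos (fun i _ => hμpos i) Finset.univ_nonempty
  have hm1 : (0:ℝ) < (n:ℝ) - 1 := by
    have : (2:ℝ) ≤ n := by exact_mod_cast hn
    linarith
  -- key bound for each i
  have key : ∀ i, D^2 * (((n:ℝ)-1) / F) ^ (n-1) ≤ μ i := by
    intro i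
    have hcard : (Finset.univ.erase i).card = n - 1 := by
      rw [Finset.card_erase_of_mem (Finset.mem_univ i), Finset.card_univ, Fintype.card_fin]
    have hsne : (Finset.univ.erase i).Nonempty := by
      rw [← Finset.card_pos, hcard]; omega
    have hsum_le : ∑ j ∈ Finset.univ.erase i, μ j ≤ F := by
      rw [← htrace]
      exact Finset.sum_le_sum_of_subset_of_nonneg (Finset.subset_univ _)
        (fun j _ _ => hμ0 j)
    have hamgm := amgm_aux (Finset.univ.erase i) hsne μ (fun j _ => hμ0 j)
    rw [hcard] at hamgm
    have hcastm : ((n - 1 : ℕ) : ℝ) = (n:ℝ) - 1 := by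
      have h1 : (1:ℕ) ≤ n := by omega
      push_cast [h1]
      ring
    have hbound : ∏ j ∈ Finset.univ.erase i, μ j ≤ (F / ((n:ℝ)-1)) ^ (n-1) := by
      refine hamgm.trans ?_
      rw [hcastm]
      gcongr
      exact div_nonneg (Finset.sum_nonneg fun j _ => hμ0 j) (le_of_lt hm1)
    have hsplit : μ i * ∏ j ∈ Finset.univ.erase i, μ j = ∏ j, μ j := by
      rw [← Finset.prod_erase_mul Finset.univ μ (Finset.mem_univ i)]
      ring
    have h1 : D^2 ≤ μ i * (F / ((n:ℝ)-1)) ^ (n-1) := by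
      rw [← hprod, ← hsplit]
      exact mul_le_mul_of_nonneg_left hbound (hμ0 i)
    have hmulpos : (0:ℝ) < (((n:ℝ)-1) / F) ^ (n-1) := pow_pos (div_pos hm1 hF0) _
    have hcancel : (F / ((n:ℝ)-1)) ^ (n-1) * (((n:ℝ)-1) / F) ^ (n-1) = 1 := by
      have hc1 : (F / ((n:ℝ)-1)) * (((n:ℝ)-1) / F) = 1 := by
        field_simp
      rw [← mul_pow, hc1, one_pow]
    calc D^2 * (((n:ℝ)-1) / F) ^ (n-1)
        ≤ (μ i * (F / ((n:ℝ)-1)) ^ (n-1)) * (((n:ℝ)-1) / F) ^ (n-1) :=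
          mul_le_mul_of_nonneg_right h1 (le_of_lt hmulpos)
      _ = μ i := by rw [mul_assoc, hcancel, mul_one]
  -- lower bound on the infimum
  have hinf : D^2 * (((n:ℝ)-1) / F) ^ (n-1) ≤ ⨅ i, μ i := le_ciInf key
  -- convert to sqrt form
  have hr0 : (0:ℝ) ≤ ((n:ℝ)-1) / F := le_of_lt (div_pos hm1 hF0)
  have hsqrt : Real.sqrt (D^2 * (((n:ℝ)-1) / F) ^ (n-1)) =
      D * (((n:ℝ)-1) / F) ^ (((n:ℝ)-1)/2) := by
    rw [Real.sqrt_mul (by positivity : (0:ℝ) ≤ D^2), Real.sqrt_sq (le_of_lt hD0)]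
    congr 1
    rw [Real.sqrt_eq_rpow, ← Real.rpow_natCast ((((n:ℝ)-1) / F)) (n-1),
      ← Real.rpow_mul hr0]
    congr 1
    have h1 : (1:ℕ) ≤ n := by omega
    push_cast [h1]
    ring
  rw [ge_iff_le, ← hsqrt]
  unfold sigmaMin
  rw [← hμdef]
  exact Real.sqrt_le_sqrt hinf
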